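/- Let G be a simple graph and v a vertex that has no incident edges in G. Let (s_1, …, s_r) be a length-r valid sequence for v in G with graph sequence G_1 = G, G_{i+1} = G_i + (s_i, v). Then the local girth of v in the final graph satisfies g_v(G_{r+1}) = min_{1 ≤ i ≤ r} ( dist_{G_i}(s_i, v) + 1 ) in ℕ∞. -/

import Mathlib

open SimpleGraph

variable {V : Type*}

/-- `G + (c,v)`: the graph obtained from `G` by adding the edge `{c, v}`. -/
def addEdge (G : SimpleGraph V) (c v : V) : SimpleGraph V :=
  G ⊔ SimpleGraph.fromEdgeSet {s(c, v)}

/-- The local girth of a vertex `v`: the infimum (in `ℕ∞`) of the lengths of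
cycles of `G` passing through `v`. -/
noncomputable def localGirth (G : SimpleGraph V) (v : V) : ℕ∞ :=
  ⨅ (a : V) (w : G.Walk a a) (_ : w.IsCycle) (_ : v ∈ w.support), (w.length : ℕ∞)

/-- The edge local girth of `e`: the infimum (in `ℕ∞`) of the lengths of
cycles of `G` containing the edge `e`. -/
noncomputable def edgeLocalGirth (G : SimpleGraph V) (e : Sym2 V) : ℕ∞ :=
  ⨅ (a : V) (w : G.Walk a a) (_ : w.IsCycle) (_ : e ∈ w.edges), (w.length : ℕ∞)

/-- A length-`r` valid sequence for `v` in `G`: pairwise distinct vertices,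
each distinct from `v` and not adjacent to `v` in `G`. -/
def ValidSeq (G : SimpleGraph V) (v : V) {r : ℕ} (s : Fin r → V) : Prop :=
  Function.Injective s ∧ ∀ i, s i ≠ v ∧ ¬ G.Adj (s i) v

/-- The graph sequence of a sequence `s`: `graphSeq G v s 0 = G₁ = G` and
`graphSeq G v s i = G_{i+1} = G_i + (s_i, v)`. -/
def graphSeq (G : SimpleGraph V) (v : V) {r : ℕ} (s : Fin r → V) : ℕ → SimpleGraph V
  | 0 => G
  | i + 1 => if h : i < r then addEdge (graphSeq G v s i) (s ⟨i, h⟩) v else graphSeq G v s i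

/-- The `r`-edge local girth of `v` in `G`: the supremum, over all length-`r`
valid sequences `s` for `v`, of the local girth of `v` in the final graph. -/
noncomputable def multiEdgeLocalGirth (G : SimpleGraph V) (v : V) (r : ℕ) : ℕ∞ :=
  ⨆ (s : Fin r → V) (_ : ValidSeq G v s), localGirth (graphSeq G v s r) v

/-- The `r`-edge local girth of `c` with respect to `v`:
`g_v(G+(c,v))` if `r = 1`, and `g_v^{(r-1)}(G+(c,v))` if `r ≥ 2`. -/
noncomputable def cnMultiEdgeLocalGirth (G : SimpleGraph V) (c v : V) (r : ℕ) : ℕ∞ :=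
  if r = 1 then localGirth (addEdge G c v) v
  else multiEdgeLocalGirth (addEdge G c v) v (r - 1)

section Aux
variable {G : SimpleGraph V} {v : V} {r : ℕ} {s : Fin r → V}

lemma addEdge_adj {c : V} (hcv : c ≠ v) (a b : V) :
    (addEdge G c v).Adj a b ↔ G.Adj a b ∨ s(a,b) = s(c,v) := by
  simp only [addEdge, sup_adj, fromEdgeSet_adj, Set.mem_singleton_iff]
  constructor
  · rintro (h | ⟨h, -⟩)
    · exact Or.inl h
    · exact Or.inr h
  · rintro (h | h)
    · exact Or.inl h
    · refine Or.inr ⟨h, ?_⟩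
      rw [Sym2.eq_iff] at h
      rintro rfl
      rcases h with ⟨rfl, rfl⟩ | ⟨rfl, rfl⟩ <;> exact hcv rfl

lemma graphSeq_adj (hs : ValidSeq G v s) (n : ℕ) (a b : V) :
    (graphSeq G v s n).Adj a b ↔
      G.Adj a b ∨ ∃ j : Fin r, (j : ℕ) < n ∧ s(a,b) = s(s j, v) := by
  induction n with
  | zero => simp [graphSeq]
  | succ n ih =>
    by_cases h : n < r
    · rw [show graphSeq G v s (n+1) = addEdge (graphSeq G v s n) (s ⟨n, h⟩) v from by
        simp [graphSeq, h]]
      rw [addEdge_adj (hs.2 ⟨n, h⟩).1, ih]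
      constructor
      · rintro ((h1 | ⟨j, hj, hj2⟩) | h2)
        · exact Or.inl h1
        · exact Or.inr ⟨j, Nat.lt_succ_of_lt hj, hj2⟩
        · exact Or.inr ⟨⟨n, h⟩, Nat.lt_succ_self n, h2⟩
      · rintro (h1 | ⟨j, hj, hj2⟩)
        · exact Or.inl (Or.inl h1)
        · rcases Nat.lt_succ_iff_lt_or_eq.mp hj with hj' | hj'
          · exact Or.inl (Or.inr ⟨j, hj', hj2⟩)
          · refine Or.inr ?_
            rwa [show (⟨n, h⟩ : Fin r) = j from Fin.ext hj'.symm]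
    · rw [show graphSeq G v s (n+1) = graphSeq G v s n from by simp [graphSeq, h], ih]
      have : ∀ j : Fin r, ((j : ℕ) < n + 1 ↔ (j : ℕ) < n) := fun j =>
        ⟨fun _ => lt_of_lt_of_le j.2 (Nat.le_of_not_lt h), fun h' => Nat.lt_succ_of_lt h'⟩
      simp only [this]

lemma le_graphSeq (hs : ValidSeq G v s) (n : ℕ) : G ≤ graphSeq G v s n := by
  intro a b hab
  rw [graphSeq_adj hs]
  exact Or.inl hab

lemma graphSeq_mono (hs : ValidSeq G v s) {m n : ℕ} (h : m ≤ n) :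
    graphSeq G v s m ≤ graphSeq G v s n := by
  intro a b hab
  rw [graphSeq_adj hs] at hab ⊢
  rcases hab with h1 | ⟨j, hj, hj2⟩
  · exact Or.inl h1
  · exact Or.inr ⟨j, lt_of_lt_of_le hj h, hj2⟩

lemma graphSeq_adj_v (hv : ∀ w : V, ¬ G.Adj v w) (hs : ValidSeq G v s) (n : ℕ) (a : V) :
    (graphSeq G v s n).Adj v a ↔ ∃ j : Fin r, (j : ℕ) < n ∧ a = s j := by
  rw [graphSeq_adj hs]
  constructor
  · rintro (h | ⟨j, hj, hj2⟩)
    · exact absurd h (hv a)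
    · rw [Sym2.eq_iff] at hj2
      rcases hj2 with ⟨rfl, rfl⟩ | ⟨h1, rfl⟩
      · exact absurd rfl (hs.2 j).1
      · exact ⟨j, hj, rfl⟩
  · rintro ⟨j, hj, rfl⟩
    exact Or.inr ⟨j, hj, Sym2.eq_swap⟩

lemma graphSeq_adj_sv (hs : ValidSeq G v s) {n : ℕ} {j : Fin r} (hj : (j : ℕ) < n) :
    (graphSeq G v s n).Adj (s j) v := by
  rw [graphSeq_adj hs]
  exact Or.inr ⟨j, hj, rfl⟩

lemma not_graphSeq_adj_sv_self (hv : ∀ w : V, ¬ G.Adj v w) (hs : ValidSeq G v s) (i : Fin r) :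
    ¬ (graphSeq G v s i).Adj (s i) v := by
  intro h
  rw [← SimpleGraph.adj_comm, graphSeq_adj_v hv hs] at h
  obtain ⟨j, hj, hj2⟩ := h
  exact absurd (Fin.ext_iff.mp (hs.1 hj2)).symm (Nat.ne_of_lt hj)

lemma aux_walk (hs : ValidSeq G v s) {a b : Fin r} (hab : (b : ℕ) < (a : ℕ))
    (q : G.Walk (s a) (s b)) :
    (graphSeq G v s a).edist (s a) v ≤ q.length + 1 := by
  have hadj : (graphSeq G v s a).Adj (s b) v := graphSeq_adj_sv hs hab
  have := SimpleGraph.edist_le ((q.mapLe (le_graphSeq hs a)).concat hadj)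
  rwa [SimpleGraph.Walk.length_concat, SimpleGraph.Walk.length_map, Nat.cast_add,
    Nat.cast_one] at this

lemma localGirth_le_of_cycle {a : V} {w : G.Walk a a} (hw : w.IsCycle) (hmem : v ∈ w.support) :
    localGirth G v ≤ w.length := by
  calc localGirth G v ≤ _ := iInf_le _ a
    _ ≤ _ := iInf_le _ w
    _ ≤ _ := iInf_le _ hw
    _ ≤ _ := iInf_le _ hmem

lemma girth_le (hv : ∀ w : V, ¬ G.Adj v w) (hs : ValidSeq G v s) (i : Fin r) :
    localGirth (graphSeq G v s r) v ≤ (graphSeq G v s i).edist (s i) v + 1 := by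
  classical
  rcases eq_or_ne ((graphSeq G v s i).edist (s i) v) ⊤ with htop | htop
  · rw [htop]; exact le_top
  · have hreach := (SimpleGraph.edist_ne_top_iff_reachable).mp htop
    obtain ⟨p0, hp0⟩ := hreach.exists_walk_length_eq_edist
    set p := p0.bypass with hp
    have hpath : p.IsPath := p0.bypass_isPath
    have hplen : (p.length : ℕ∞) ≤ (graphSeq G v s i).edist (s i) v := by
      rw [← hp0]; exact_mod_cast p0.length_bypass_le
    have hnadj := not_graphSeq_adj_sv_self hv hs i
    have hne : s(s i, v) ∉ p.edges := fun h =>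
      hnadj (p.edges_subset_edgeSet h)
    set P : (graphSeq G v s r).Walk (s i) v := p.mapLe (graphSeq_mono hs (le_of_lt i.2))
    have hPpath : P.IsPath := hpath.mapLe _
    have hPedges : P.edges = p.edges := by
      show (SimpleGraph.Walk.map _ p).edges = p.edges
      rw [SimpleGraph.Walk.edges_map]
      have : ⇑(SimpleGraph.Hom.ofLE (graphSeq_mono hs (le_of_lt i.2)))
          = id := rfl
      rw [this, Sym2.map_id, List.map_id]
    have hadj : (graphSeq G v s r).Adj v (s i) :=
      ((graphSeq_adj_v hv hs r (s i)).mpr ⟨i, i.2, rfl⟩)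
    have hcyc : (SimpleGraph.Walk.cons hadj P).IsCycle := by
      rw [SimpleGraph.Walk.cons_isCycle_iff]
      refine ⟨hPpath, fun h => hne ?_⟩
      rw [hPedges, Sym2.eq_swap] at h
      exact h
    have hmem : v ∈ (SimpleGraph.Walk.cons hadj P).support := SimpleGraph.Walk.start_mem_support _
    calc localGirth (graphSeq G v s r) v ≤ (SimpleGraph.Walk.cons hadj P).length :=
          localGirth_le_of_cycle hcyc hmem
      _ = (P.length : ℕ∞) + 1 := by rw [SimpleGraph.Walk.length_cons]; push_cast; ring
      _ = (p.length : ℕ∞) + 1 := by rw [SimpleGraph.Walk.length_map]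
      _ ≤ _ := by exact add_le_add_left hplen 1

lemma cycle_lower (hv : ∀ w : V, ¬ G.Adj v w) (hs : ValidSeq G v s)
    {w : (graphSeq G v s r).Walk v v} (hw : w.IsCycle) :
    ∃ i : Fin r, (graphSeq G v s i).edist (s i) v + 1 ≤ (w.length : ℕ∞) := by
  classical
  have h3 := hw.three_le_length
  have hnn : ¬ w.Nil := fun hn => hw.ne_nil hn.eq_nil
  obtain ⟨b, h, p, rfl⟩ := SimpleGraph.Walk.not_nil_iff.mp hnn
  rw [SimpleGraph.Walk.cons_isCycle_iff] at hw
  obtain ⟨hp, hep⟩ := hw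
  obtain ⟨j, hj, hbj⟩ := (graphSeq_adj_v hv hs r b).mp h
  subst hbj
  have hprpath : p.reverse.IsPath := hp.reverse
  have hplen : 2 ≤ p.length := by
    rw [SimpleGraph.Walk.length_cons] at h3; omega
  have hnn2 : ¬ p.reverse.Nil := by
    rw [SimpleGraph.Walk.not_nil_iff_lt_length, SimpleGraph.Walk.length_reverse]; omega
  obtain ⟨c, h', q, hpr⟩ := SimpleGraph.Walk.not_nil_iff.mp hnn2
  obtain ⟨k, hk, hck⟩ := (graphSeq_adj_v hv hs r c).mp h'
  subst hck
  rw [hpr, SimpleGraph.Walk.cons_isPath_iff] at hprpath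
  obtain ⟨hq, hvq⟩ := hprpath
  have hqlen : q.length + 1 = p.length := by
    have := congrArg SimpleGraph.Walk.length hpr
    rw [SimpleGraph.Walk.length_reverse, SimpleGraph.Walk.length_cons] at this
    omega
  -- edges of q lie in G
  have hqe : ∀ e ∈ q.edges, e ∈ G.edgeSet := by
    intro e he
    induction e with
    | _ x y =>
      have hx : x ∈ q.support := q.fst_mem_support_of_mem_edges he
      have hy : y ∈ q.support := q.snd_mem_support_of_mem_edges he
      have hxv : x ≠ v := fun hxv => hvq (hxv ▸ hx)
      have hyv : y ≠ v := fun hyv => hvq (hyv ▸ hy)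
      have hadj : (graphSeq G v s r).Adj x y := q.adj_of_mem_edges he
      rw [graphSeq_adj hs] at hadj
      rcases hadj with h1 | ⟨m, _, h2⟩
      · exact h1
      · rw [Sym2.eq_iff] at h2
        rcases h2 with ⟨-, rfl⟩ | ⟨rfl, -⟩
        · exact absurd rfl hyv
        · exact absurd rfl hxv
  have hjk : k ≠ j := by
    rintro rfl
    have := SimpleGraph.Walk.isPath_iff_eq_nil.mp hq
    rw [this] at hqlen
    simp only [SimpleGraph.Walk.length_nil] at hqlen
    omega
  have hjk' : (k : ℕ) ≠ (j : ℕ) := fun hh => hjk (Fin.ext hh)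
  set qG : G.Walk (s k) (s j) := q.transfer G hqe with hqG
  have hqGlen : qG.length = q.length := q.length_transfer hqe
  have hwlen : (SimpleGraph.Walk.cons h p).length = q.length + 2 := by
    rw [SimpleGraph.Walk.length_cons]; omega
  rcases lt_or_gt_of_ne hjk' with hlt | hlt
  · -- k < j : walk qG from s k to s j reversed: Walk (s j) (s k), then edge (s k, v)
    refine ⟨j, ?_⟩
    have := aux_walk hs hlt qG.reverse
    rw [SimpleGraph.Walk.length_reverse, hqGlen] at this
    calc (graphSeq G v s j).edist (s j) v + 1 ≤ ((q.length : ℕ∞) + 1) + 1 :=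
          add_le_add_left this 1
      _ = ((SimpleGraph.Walk.cons h p).length : ℕ∞) := by rw [hwlen]; push_cast; ring
  · -- j < k
    refine ⟨k, ?_⟩
    have := aux_walk hs hlt qG
    rw [hqGlen] at this
    calc (graphSeq G v s k).edist (s k) v + 1 ≤ ((q.length : ℕ∞) + 1) + 1 :=
          add_le_add_left this 1
      _ = ((SimpleGraph.Walk.cons h p).length : ℕ∞) := by rw [hwlen]; push_cast; ring

end Aux

/-- If `v` has no incident edges in `G` and `(s_1, …, s_r)` is a length-`r`
valid sequence for `v` with graph sequence `G_1 = G`, `G_{i+1} = G_i + (s_i, v)`, then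
`g_v(G_{r+1}) = min_{1 ≤ i ≤ r} (dist_{G_i}(s_i, v) + 1)` in `ℕ∞`. -/
theorem stmt_4 (G : SimpleGraph V) (v : V) (hv : ∀ w : V, ¬ G.Adj v w)
    {r : ℕ} (hr : 1 ≤ r) (s : Fin r → V) (hs : ValidSeq G v s) :
    localGirth (graphSeq G v s r) v =
      ⨅ i : Fin r, ((graphSeq G v s i.1).edist (s i) v + 1) := by
  classical
  apply le_antisymm
  · exact le_iInf fun i => girth_le hv hs i
  · rw [localGirth]
    refine le_iInf fun a => le_iInf fun w => le_iInf fun hc => le_iInf fun hmem => ?_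
    have hc' := hc.rotate hmem
    have hlen : (w.rotate v hmem).length = w.length := by
      have := (SimpleGraph.Walk.rotate_darts w v hmem).perm.length_eq
      rwa [SimpleGraph.Walk.length_darts, SimpleGraph.Walk.length_darts] at this
    obtain ⟨i, hi⟩ := cycle_lower hv hs hc'
    rw [hlen] at hi
    exact le_trans (iInf_le _ i) hi
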